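/- Let Z be an irreducible, symmetric, mean-zero random walk on ℤ with finite second moment. There exists a constant γ > 0 such that for all integers 0 ≤ x ≤ k, the probability that the walk started at x hits k before hitting 0 satisfies P^x(τ_k < τ_0) ≤ γ x / k. -/

import Mathlib

open MeasureTheory ProbabilityTheory Finset Filter
open scoped ENNReal NNReal

/-- Discrete-time random walk on ℤ started at `x`, built from the step sequence `ξ`. -/
def walk {Ω : Type*} (ξ : ℕ → Ω → ℤ) (x : ℤ) (ω : Ω) (n : ℕ) : ℤ :=
  x + ∑ i ∈ Finset.range n, ξ i ω

noncomputable def phiF (p : ℤ → ℝ) (θ : ℝ) : ℝ := ∑' z : ℤ, p z * Real.cos (z * θ)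

noncomputable def FF (p : ℤ → ℝ) (y : ℤ) : ℝ :=
  ∫ θ in Set.Ioc (-Real.pi) Real.pi, (1 - Real.cos (y * θ)) / (1 - phiF p θ)

lemma cos_summable {p : ℤ → ℝ} (hp0 : ∀ z, 0 ≤ p z) (hp1 : Summable p) (θ : ℝ) :
    Summable fun z : ℤ => p z * Real.cos (z * θ) := by
  apply Summable.of_norm_bounded hp1
  intro z
  rw [norm_mul, Real.norm_eq_abs, Real.norm_eq_abs, abs_of_nonneg (hp0 z)]
  nlinarith [Real.abs_cos_le_one ((z:ℝ) * θ), abs_nonneg (Real.cos ((z:ℝ)*θ)), hp0 z]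

lemma sin_summable {p : ℤ → ℝ} (hp0 : ∀ z, 0 ≤ p z) (hp1 : Summable p) (θ : ℝ) :
    Summable fun z : ℤ => p z * Real.sin (z * θ) := by
  apply Summable.of_norm_bounded hp1
  intro z
  rw [norm_mul, Real.norm_eq_abs, Real.norm_eq_abs, abs_of_nonneg (hp0 z)]
  nlinarith [Real.abs_sin_le_one ((z:ℝ) * θ), abs_nonneg (Real.sin ((z:ℝ)*θ)), hp0 z]

lemma sin_sum_zero {p : ℤ → ℝ} (hsymm : ∀ z, p (-z) = p z) (θ : ℝ) :
    ∑' z : ℤ, p z * Real.sin (z * θ) = 0 := by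
  have h := (Equiv.neg ℤ).tsum_eq (fun z : ℤ => p z * Real.sin (z * θ))
  simp only [Equiv.neg_apply] at h
  have h2 : ∀ z : ℤ, p (-z) * Real.sin ((-z : ℤ) * θ) = -(p z * Real.sin (z * θ)) := by
    intro z
    rw [hsymm]
    push_cast
    rw [neg_mul, Real.sin_neg]
    ring
  rw [tsum_congr h2, tsum_neg] at h
  linarith [h]

lemma mul_one_sub_cos_summable {p : ℤ → ℝ} (hp0 : ∀ z, 0 ≤ p z) (hp1 : Summable p) (θ : ℝ) :
    Summable fun z : ℤ => p z * (1 - Real.cos (z * θ)) := by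
  have := (hp1.sub (cos_summable hp0 hp1 θ))
  simpa [mul_sub] using this

lemma one_sub_phi {p : ℤ → ℝ} (hp0 : ∀ z, 0 ≤ p z) (hsum : HasSum p 1) (θ : ℝ) :
    1 - phiF p θ = ∑' z : ℤ, p z * (1 - Real.cos (z * θ)) := by
  have h1 : ∑' z : ℤ, p z = 1 := hsum.tsum_eq
  have h2 := Summable.tsum_sub hsum.summable (cos_summable hp0 hsum.summable θ)
  rw [phiF]
  rw [show (fun z : ℤ => p z * (1 - Real.cos (z * θ))) = fun z : ℤ =>
    p z - p z * Real.cos (z * θ) from funext fun z => by ring]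
  rw [h2, h1]

lemma one_sub_phi_nonneg {p : ℤ → ℝ} (hp0 : ∀ z, 0 ≤ p z) (hsum : HasSum p 1) (θ : ℝ) :
    0 ≤ 1 - phiF p θ := by
  rw [one_sub_phi hp0 hsum θ]
  apply tsum_nonneg
  intro z
  have := Real.cos_le_one ((z:ℝ) * θ)
  nlinarith [hp0 z]

lemma one_sub_phi_le {p : ℤ → ℝ} (hp0 : ∀ z, 0 ≤ p z) (hsum : HasSum p 1)
    (hmom : Summable fun z : ℤ => (z : ℝ) ^ 2 * p z) (θ : ℝ) :
    1 - phiF p θ ≤ (∑' z : ℤ, (z : ℝ) ^ 2 * p z) / 2 * θ ^ 2 := by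
  rw [one_sub_phi hp0 hsum θ]
  have hb : ∀ z : ℤ, p z * (1 - Real.cos (z * θ)) ≤ (z : ℝ) ^ 2 * p z * (θ ^ 2 / 2) := by
    intro z
    have h := Real.one_sub_sq_div_two_le_cos (x := (z:ℝ) * θ)
    have := hp0 z
    nlinarith
  calc ∑' z : ℤ, p z * (1 - Real.cos (z * θ))
      ≤ ∑' z : ℤ, (z : ℝ) ^ 2 * p z * (θ ^ 2 / 2) :=
        Summable.tsum_le_tsum hb (mul_one_sub_cos_summable hp0 hsum.summable θ)
          (hmom.mul_right (θ^2/2))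
    _ = (∑' z : ℤ, (z : ℝ) ^ 2 * p z) / 2 * θ ^ 2 := by
        rw [tsum_mul_right]; ring

lemma phi_cont {p : ℤ → ℝ} (hp0 : ∀ z, 0 ≤ p z) (hp1 : Summable p) :
    Continuous (phiF p) := by
  apply continuous_tsum (fun z => by fun_prop) hp1
  intro z θ
  rw [norm_mul, Real.norm_eq_abs, Real.norm_eq_abs, abs_of_nonneg (hp0 z)]
  nlinarith [Real.abs_cos_le_one ((z:ℝ) * θ), abs_nonneg (Real.cos ((z:ℝ)*θ)), hp0 z]

lemma exists_z0 {p : ℤ → ℝ} (hp0 : ∀ z, 0 ≤ p z)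
    (hirr : AddSubgroup.closure {z : ℤ | p z ≠ 0} = ⊤) :
    ∃ z0 : ℤ, z0 ≠ 0 ∧ 0 < p z0 := by
  by_contra h
  push_neg at h
  have hsub : {z : ℤ | p z ≠ 0} ⊆ ((⊥ : AddSubgroup ℤ) : Set ℤ) := by
    intro z hz
    rcases eq_or_ne z 0 with rfl | hz0
    · simp [AddSubgroup.mem_bot]
    · exact absurd (lt_of_le_of_ne (hp0 z) (Ne.symm hz)) (by simpa using h z hz0)
  have hle := (AddSubgroup.closure_le (K := (⊥ : AddSubgroup ℤ))).2 hsub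
  rw [hirr] at hle
  have h1 : (1 : ℤ) ∈ (⊥ : AddSubgroup ℤ) := hle trivial
  simpa using h1

lemma phi_lt_one {p : ℤ → ℝ} (hp0 : ∀ z, 0 ≤ p z) (hsum : HasSum p 1)
    (hirr : AddSubgroup.closure {z : ℤ | p z ≠ 0} = ⊤)
    {θ : ℝ} (hθ0 : θ ≠ 0) (hθπ : |θ| ≤ Real.pi) : phiF p θ < 1 := by
  rcases lt_or_eq_of_le (one_sub_phi_nonneg hp0 hsum θ) with h | h
  · linarith
  · exfalso
    have hz : ∀ z : ℤ, p z * (1 - Real.cos (z * θ)) = 0 := by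
      have hs := mul_one_sub_cos_summable hp0 hsum.summable θ
      have hzero : ∑' z : ℤ, p z * (1 - Real.cos (z * θ)) = 0 := by
        rw [← one_sub_phi hp0 hsum θ, ← h]
      have hnn : ∀ z : ℤ, 0 ≤ p z * (1 - Real.cos (z * θ)) := by
        intro z
        have := Real.cos_le_one ((z:ℝ)*θ)
        nlinarith [hp0 z]
      intro z
      by_contra hne
      have hpos : 0 < p z * (1 - Real.cos (z * θ)) := lt_of_le_of_ne (hnn z) (Ne.symm hne)
      have := Summable.tsum_pos hs hnn z hpos
      rw [hzero] at this
      exact lt_irrefl _ this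
    set H : AddSubgroup ℤ := {
      carrier := {z : ℤ | Real.cos (z * θ) = 1}
      zero_mem' := by simp
      add_mem' := by
        intro a b ha hb
        rcases (Real.cos_eq_one_iff _).1 ha with ⟨m, hm⟩
        rcases (Real.cos_eq_one_iff _).1 hb with ⟨m', hm'⟩
        apply (Real.cos_eq_one_iff _).2
        refine ⟨m + m', ?_⟩
        push_cast
        push_cast at hm hm'
        linarith [hm, hm']
      neg_mem' := by
        intro a ha
        rcases (Real.cos_eq_one_iff _).1 ha with ⟨m, hm⟩
        apply (Real.cos_eq_one_iff _).2
        refine ⟨-m, ?_⟩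
        push_cast
        push_cast at hm
        linarith [hm] } with hHdef
    have hsub : {z : ℤ | p z ≠ 0} ⊆ (H : Set ℤ) := by
      intro z hzne
      have h0 := hz z
      have : 1 - Real.cos ((z:ℝ) * θ) = 0 := by
        rcases mul_eq_zero.1 h0 with h' | h'
        · exact absurd h' hzne
        · exact h'
      show Real.cos ((z:ℝ) * θ) = 1
      linarith
    have hle := (AddSubgroup.closure_le (K := H)).2 hsub
    rw [hirr] at hle
    have h1 : (1 : ℤ) ∈ H := hle trivial
    have hc : Real.cos (((1:ℤ):ℝ) * θ) = 1 := h1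
    rcases (Real.cos_eq_one_iff _).1 hc with ⟨m, hm⟩
    simp only [Int.cast_one, one_mul] at hm
    rcases eq_or_ne m 0 with rfl | hm0
    · simp at hm; exact hθ0 hm.symm
    · have : (2:ℝ) * Real.pi ≤ |θ| := by
        rw [← hm, abs_mul]
        have h2 : (0:ℝ) < 2 * Real.pi := by positivity
        have : (1:ℝ) ≤ |(m:ℝ)| := by
          rw [← Int.cast_abs]
          exact_mod_cast Int.one_le_abs hm0
        calc (2:ℝ) * Real.pi = 1 * |2 * Real.pi| := by rw [abs_of_pos h2]; ring
          _ ≤ |(m:ℝ)| * |2 * Real.pi| := by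
              apply mul_le_mul_of_nonneg_right this (abs_nonneg _)
      linarith [Real.pi_pos]

lemma exists_c {p : ℤ → ℝ} (hp0 : ∀ z, 0 ≤ p z) (hsum : HasSum p 1)
    (hirr : AddSubgroup.closure {z : ℤ | p z ≠ 0} = ⊤) :
    ∃ c : ℝ, 0 < c ∧ ∀ θ : ℝ, |θ| ≤ Real.pi → c * θ ^ 2 ≤ 1 - phiF p θ := by
  obtain ⟨z0, hz0, hpz0⟩ := exists_z0 hp0 hirr
  have hz0abs : (1:ℝ) ≤ |(z0:ℝ)| := by
    rw [← Int.cast_abs]; exact_mod_cast Int.one_le_abs hz0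
  have hπ := Real.pi_pos
  set δ : ℝ := Real.pi / |(z0:ℝ)| with hδdef
  have hδpos : 0 < δ := by positivity
  have hδle : δ ≤ Real.pi := by
    rw [hδdef, div_le_iff₀ (by linarith)]
    nlinarith
  -- compact part
  set K : Set ℝ := Set.Icc (-Real.pi) Real.pi ∩ {θ | δ ≤ |θ|} with hKdef
  have hKcomp : IsCompact K := isCompact_Icc.inter_right (by
    have : {θ : ℝ | δ ≤ |θ|} = {θ : ℝ | δ ≤ |θ|} := rfl
    exact isClosed_le continuous_const continuous_abs)
  have hKne : K.Nonempty := ⟨Real.pi, by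
    constructor
    · constructor <;> [linarith; linarith]
    · show δ ≤ |Real.pi|
      rw [abs_of_pos hπ]; exact hδle⟩
  have hcont : ContinuousOn (fun θ => 1 - phiF p θ) K :=
    (continuous_const.sub (phi_cont hp0 hsum.summable)).continuousOn
  obtain ⟨θm, hθmK, hθmin⟩ := hKcomp.exists_isMinOn hKne hcont
  set η : ℝ := 1 - phiF p θm with hηdef
  have hηpos : 0 < η := by
    have hθm0 : θm ≠ 0 := by
      intro h0
      have h2 : δ ≤ |θm| := hθmK.2
      rw [h0, abs_zero] at h2
      linarith
    have := phi_lt_one hp0 hsum hirr hθm0 (abs_le.2 hθmK.1)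
    linarith
  refine ⟨min (p z0 * (2 / Real.pi ^ 2) * (z0:ℝ) ^ 2) (η / Real.pi ^ 2), ?_, ?_⟩
  · apply lt_min
    · positivity
    · positivity
  · intro θ hθ
    rcases le_or_gt |θ| δ with hcase | hcase
    · -- near zero : single term bound
      have hterm : p z0 * (1 - Real.cos (z0 * θ)) ≤ 1 - phiF p θ := by
        rw [one_sub_phi hp0 hsum θ]
        apply Summable.le_tsum (mul_one_sub_cos_summable hp0 hsum.summable θ) z0
        intro j _
        have := Real.cos_le_one ((j:ℝ)*θ)
        nlinarith [hp0 j]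
      have habs : |(z0:ℝ) * θ| ≤ Real.pi := by
        rw [abs_mul]
        calc |(z0:ℝ)| * |θ| ≤ |(z0:ℝ)| * δ := by
              apply mul_le_mul_of_nonneg_left hcase (abs_nonneg _)
          _ = Real.pi := by
              rw [hδdef]; field_simp
      have hcos := Real.cos_le_one_sub_mul_cos_sq habs
      have : p z0 * (2 / Real.pi ^ 2) * ((z0:ℝ) * θ) ^ 2 ≤ 1 - phiF p θ := by
        have h2 : 2 / Real.pi ^ 2 * ((z0:ℝ)*θ)^2 ≤ 1 - Real.cos ((z0:ℝ)*θ) := by linarith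
        calc p z0 * (2 / Real.pi ^ 2) * ((z0:ℝ) * θ) ^ 2
            = p z0 * (2 / Real.pi ^ 2 * ((z0:ℝ)*θ)^2) := by ring
          _ ≤ p z0 * (1 - Real.cos ((z0:ℝ)*θ)) := by
              apply mul_le_mul_of_nonneg_left h2 (hp0 z0)
          _ ≤ 1 - phiF p θ := hterm
      calc min (p z0 * (2 / Real.pi ^ 2) * (z0:ℝ) ^ 2) (η / Real.pi ^ 2) * θ ^ 2
          ≤ p z0 * (2 / Real.pi ^ 2) * (z0:ℝ) ^ 2 * θ ^ 2 := by
            apply mul_le_mul_of_nonneg_right (min_le_left _ _) (sq_nonneg θ)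
        _ = p z0 * (2 / Real.pi ^ 2) * ((z0:ℝ) * θ) ^ 2 := by ring
        _ ≤ 1 - phiF p θ := this
    · -- away from zero : compactness bound
      have hθK : θ ∈ K := ⟨abs_le.1 hθ, le_of_lt hcase⟩
      have hmin := hθmin hθK
      have hθsq : θ ^ 2 ≤ Real.pi ^ 2 := by
        rw [← sq_abs]
        apply pow_le_pow_left₀ (abs_nonneg θ) hθ
      calc min (p z0 * (2 / Real.pi ^ 2) * (z0:ℝ) ^ 2) (η / Real.pi ^ 2) * θ ^ 2
          ≤ η / Real.pi ^ 2 * θ ^ 2 := by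
            apply mul_le_mul_of_nonneg_right (min_le_right _ _) (sq_nonneg θ)
        _ ≤ η / Real.pi ^ 2 * Real.pi ^ 2 := by
            apply mul_le_mul_of_nonneg_left hθsq (by positivity)
        _ = η := by field_simp
        _ ≤ 1 - phiF p θ := hmin

section FFbounds
variable {p : ℤ → ℝ} {c : ℝ}

lemma integrand_meas (hp0 : ∀ z, 0 ≤ p z) (hp1 : Summable p) (y : ℤ) :
    Measurable fun θ : ℝ => (1 - Real.cos (y * θ)) / (1 - phiF p θ) :=
  ((continuous_const.sub (Real.continuous_cos.comp (continuous_const.mul continuous_id))).measurable).div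
    ((continuous_const.sub (phi_cont hp0 hp1)).measurable)

lemma integrand_nonneg (hp0 : ∀ z, 0 ≤ p z) (hsum : HasSum p 1) (y : ℤ) (θ : ℝ) :
    0 ≤ (1 - Real.cos (y * θ)) / (1 - phiF p θ) := by
  apply div_nonneg _ (one_sub_phi_nonneg hp0 hsum θ)
  linarith [Real.cos_le_one ((y:ℝ)*θ)]

lemma integrand_le (hcpos : 0 < c)
    (hc : ∀ θ : ℝ, |θ| ≤ Real.pi → c * θ ^ 2 ≤ 1 - phiF p θ)
    (y : ℤ) {θ : ℝ} (hθ : |θ| ≤ Real.pi) :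
    (1 - Real.cos (y * θ)) / (1 - phiF p θ) ≤ (y:ℝ) ^ 2 / (2 * c) := by
  rcases eq_or_ne θ 0 with rfl | hθ0
  · simp [Real.cos_zero]
    positivity
  · have hden : c * θ ^ 2 ≤ 1 - phiF p θ := hc θ hθ
    have hdenpos : 0 < c * θ ^ 2 := by positivity
    have hnum : 1 - Real.cos ((y:ℝ) * θ) ≤ (y:ℝ)^2 * θ^2 / 2 := by
      have := Real.one_sub_sq_div_two_le_cos (x := (y:ℝ) * θ)
      nlinarith
    calc (1 - Real.cos (y * θ)) / (1 - phiF p θ)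
        ≤ ((y:ℝ)^2 * θ^2 / 2) / (c * θ ^ 2) := by
          apply div_le_div₀ (by positivity) hnum hdenpos hden
      _ = (y:ℝ) ^ 2 / (2 * c) := by
          field_simp

lemma integrand_le_two (hcpos : 0 < c)
    (hc : ∀ θ : ℝ, |θ| ≤ Real.pi → c * θ ^ 2 ≤ 1 - phiF p θ)
    (y : ℤ) {θ : ℝ} (hθ : |θ| ≤ Real.pi) (hθ0 : θ ≠ 0) :
    (1 - Real.cos (y * θ)) / (1 - phiF p θ) ≤ (2 / c) * θ ^ (-2 : ℤ) := by
  have hden : c * θ ^ 2 ≤ 1 - phiF p θ := hc θ hθ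
  have hdenpos : 0 < c * θ ^ 2 := by positivity
  have hnum : 1 - Real.cos ((y:ℝ) * θ) ≤ 2 := by
    linarith [Real.neg_one_le_cos ((y:ℝ)*θ)]
  calc (1 - Real.cos (y * θ)) / (1 - phiF p θ)
      ≤ 2 / (c * θ ^ 2) := div_le_div₀ (by norm_num) hnum hdenpos hden
    _ = (2 / c) * θ ^ (-2 : ℤ) := by
        have h2 : θ ^ (-2:ℤ) = (θ^2)⁻¹ := by
          rw [zpow_neg]; norm_cast
        rw [h2, ← div_eq_mul_inv, div_div]

lemma FF_integrableOn (hp0 : ∀ z, 0 ≤ p z) (hsum : HasSum p 1) (hcpos : 0 < c)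
    (hc : ∀ θ : ℝ, |θ| ≤ Real.pi → c * θ ^ 2 ≤ 1 - phiF p θ) (y : ℤ) :
    IntegrableOn (fun θ : ℝ => (1 - Real.cos (y * θ)) / (1 - phiF p θ))
      (Set.Ioc (-Real.pi) Real.pi) := by
  apply Integrable.mono' (g := fun _ => (y:ℝ) ^ 2 / (2 * c))
    (integrableOn_const measure_Ioc_lt_top.ne)
    ((integrand_meas hp0 hsum.summable y).aestronglyMeasurable)
  filter_upwards [ae_restrict_mem measurableSet_Ioc] with θ hθ
  rw [Real.norm_eq_abs, abs_of_nonneg (integrand_nonneg hp0 hsum y θ)]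
  apply integrand_le hcpos hc y
  rw [abs_le]
  exact ⟨le_of_lt hθ.1, hθ.2⟩

lemma FF_nonneg (hp0 : ∀ z, 0 ≤ p z) (hsum : HasSum p 1) (y : ℤ) : 0 ≤ FF p y :=
  setIntegral_nonneg measurableSet_Ioc (fun θ _ => integrand_nonneg hp0 hsum y θ)

lemma FF_le (hp0 : ∀ z, 0 ≤ p z) (hsum : HasSum p 1) (hcpos : 0 < c)
    (hc : ∀ θ : ℝ, |θ| ≤ Real.pi → c * θ ^ 2 ≤ 1 - phiF p θ) (y : ℤ) :
    FF p y ≤ 5 / c * |(y:ℝ)| := by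
  rcases eq_or_ne y 0 with rfl | hy
  · have : FF p 0 = 0 := by
      rw [FF]
      rw [show (fun θ : ℝ => (1 - Real.cos (((0:ℤ):ℝ) * θ)) / (1 - phiF p θ)) = fun _ => (0:ℝ)
        from funext fun θ => by norm_num]
      simp
    rw [this]
    simp
  · have hπ := Real.pi_pos
    have hπ3 : (3:ℝ) < Real.pi := by
      have := Real.pi_gt_three
      linarith
    have hyabs : (1:ℝ) ≤ |(y:ℝ)| := by
      rw [← Int.cast_abs]; exact_mod_cast Int.one_le_abs hy
    set t : ℝ := 1 / |(y:ℝ)| with htdef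
    have htpos : 0 < t := by positivity
    have htle1 : t ≤ 1 := by
      rw [htdef, div_le_one (by linarith)]; exact hyabs
    have htπ : t ≤ Real.pi := by linarith
    have h1 : -Real.pi ≤ -t := by linarith
    have h2 : -t ≤ t := by linarith
    have h3 : t ≤ Real.pi := htπ
    set f : ℝ → ℝ := fun θ => (1 - Real.cos (y * θ)) / (1 - phiF p θ) with hfdef
    have hfint := FF_integrableOn hp0 hsum hcpos hc y
    have hintA : IntegrableOn f (Set.Ioc (-Real.pi) (-t)) :=
      hfint.mono_set (Set.Ioc_subset_Ioc le_rfl (by linarith))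
    have hintB : IntegrableOn f (Set.Ioc (-t) t) :=
      hfint.mono_set (Set.Ioc_subset_Ioc (by linarith) htπ)
    have hintC : IntegrableOn f (Set.Ioc t Real.pi) :=
      hfint.mono_set (Set.Ioc_subset_Ioc (by linarith) le_rfl)
    have hmid : (∫ θ in Set.Ioc (-t) t, f θ) ≤ |(y:ℝ)| / c := by
      have hb : (∫ θ in Set.Ioc (-t) t, f θ) ≤ ∫ _ in Set.Ioc (-t) t, (y:ℝ)^2/(2*c) := by
        apply setIntegral_mono_on hintB (integrableOn_const measure_Ioc_lt_top.ne)
          measurableSet_Ioc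
        intro θ hθ
        apply integrand_le hcpos hc y
        rw [abs_le]
        constructor <;> [linarith [hθ.1]; linarith [hθ.2]]
      rw [setIntegral_const, measureReal_def, Real.volume_Ioc] at hb
      have hv : (ENNReal.ofReal (t - -t)).toReal = 2 * t := by
        rw [ENNReal.toReal_ofReal (by linarith)]; ring
      rw [hv] at hb
      calc (∫ θ in Set.Ioc (-t) t, f θ) ≤ 2 * t * ((y:ℝ)^2/(2*c)) := by
            simpa [smul_eq_mul] using hb
        _ = |(y:ℝ)| / c := by
            rw [htdef]
            field_simp
            rw [pow_two ((y:ℝ)), ← abs_mul_abs_self ((y:ℝ))]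
            ring
    have e1 : FF p y = (∫ θ in Set.Ioc (-Real.pi) t, f θ) + (∫ θ in Set.Ioc t Real.pi, f θ) := by
      rw [FF, ← Set.Ioc_union_Ioc_eq_Ioc (by linarith : -Real.pi ≤ t) h3]
      exact setIntegral_union (Set.Ioc_disjoint_Ioc_of_le le_rfl) measurableSet_Ioc
        (hfint.mono_set (Set.Ioc_subset_Ioc le_rfl htπ)) hintC
    have e2 : (∫ θ in Set.Ioc (-Real.pi) t, f θ)
        = (∫ θ in Set.Ioc (-Real.pi) (-t), f θ) + (∫ θ in Set.Ioc (-t) t, f θ) := by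
      rw [← Set.Ioc_union_Ioc_eq_Ioc h1 h2]
      exact setIntegral_union (Set.Ioc_disjoint_Ioc_of_le le_rfl) measurableSet_Ioc hintA hintB
    -- integral of θ⁻² over a positive interval
    have hzint : ∀ a b : ℝ, (0:ℝ) ∉ Set.uIcc a b → a ≤ b →
        (∫ θ in Set.Ioc a b, (2/c) * θ ^ (-2:ℤ)) = (2/c) * (1/a - 1/b) := by
      intro a b h0 hab
      rw [← intervalIntegral.integral_of_le hab, intervalIntegral.integral_const_mul]
      rw [integral_zpow (Or.inr ⟨by norm_num, h0⟩)]
      norm_num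
      exact Or.inl (by ring)
    have hCbound : (∫ θ in Set.Ioc t Real.pi, f θ) ≤ (2/c) * (1/t - 1/Real.pi) := by
      have hg : IntegrableOn (fun θ : ℝ => (2/c) * θ ^ (-2:ℤ)) (Set.Ioc t Real.pi) := by
        have := (intervalIntegral.intervalIntegrable_zpow (μ := volume) (n := -2) (a := t) (b := Real.pi)
          (Or.inr (by
            rw [Set.uIcc_of_le htπ]
            intro hmem
            exact absurd hmem.1 (not_le.2 htpos)))).const_mul (2/c)
        exact (intervalIntegrable_iff_integrableOn_Ioc_of_le htπ).1 this
      have := setIntegral_mono_on hintC hg measurableSet_Ioc (fun θ hθ => by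
        apply integrand_le_two hcpos hc y
        · rw [abs_le]; constructor <;> [linarith [hθ.1]; linarith [hθ.2]]
        · intro h0; rw [h0] at hθ; exact absurd hθ.1 (not_lt.2 (le_of_lt htpos)))
      rw [hzint t Real.pi (by
        rw [Set.uIcc_of_le htπ]
        intro hmem
        exact absurd hmem.1 (not_le.2 htpos)) htπ] at this
      exact this
    have hAbound : (∫ θ in Set.Ioc (-Real.pi) (-t), f θ) ≤ (2/c) * (1/t - 1/Real.pi) := by
      have hab : -Real.pi ≤ -t := by linarith
      have h0mem : (0:ℝ) ∉ Set.uIcc (-Real.pi) (-t) := by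
        rw [Set.uIcc_of_le hab]
        intro hmem
        exact absurd hmem.2 (not_le.2 (by linarith))
      have hg : IntegrableOn (fun θ : ℝ => (2/c) * θ ^ (-2:ℤ)) (Set.Ioc (-Real.pi) (-t)) := by
        have := (intervalIntegral.intervalIntegrable_zpow (μ := volume) (n := -2) (a := -Real.pi) (b := -t)
          (Or.inr h0mem)).const_mul (2/c)
        exact (intervalIntegrable_iff_integrableOn_Ioc_of_le hab).1 this
      have hmono := setIntegral_mono_on hintA hg measurableSet_Ioc (fun θ hθ => by
        apply integrand_le_two hcpos hc y
        · rw [abs_le]; constructor <;> [linarith [hθ.1]; linarith [hθ.2]]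
        · intro h0; rw [h0] at hθ; exact absurd hθ.2 (not_le.2 (by linarith)))
      rw [hzint (-Real.pi) (-t) h0mem hab] at hmono
      have : (2/c) * (1/(-Real.pi) - 1/(-t)) = (2/c) * (1/t - 1/Real.pi) := by
        rw [div_neg, div_neg]
        ring
      rw [this] at hmono
      exact hmono
    have hinv : 1/t = |(y:ℝ)| := by
      rw [htdef]; field_simp
    have hπinv : 0 < 1/Real.pi := by positivity
    calc FF p y = (∫ θ in Set.Ioc (-Real.pi) (-t), f θ) + (∫ θ in Set.Ioc (-t) t, f θ)
          + (∫ θ in Set.Ioc t Real.pi, f θ) := by rw [e1, e2]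
      _ ≤ (2/c) * (1/t - 1/Real.pi) + |(y:ℝ)| / c + (2/c) * (1/t - 1/Real.pi) := by
          linarith [hAbound, hmid, hCbound]
      _ ≤ 5 / c * |(y:ℝ)| := by
          rw [hinv] at *
          have h4 : (2/c) * (|(y:ℝ)| - 1/Real.pi) ≤ 2/c * |(y:ℝ)| := by
            apply mul_le_mul_of_nonneg_left (by linarith) (by positivity)
          have hcinv : 0 < 1/c := by positivity
          calc (2/c) * (|(y:ℝ)| - 1/Real.pi) + |(y:ℝ)| / c + (2/c) * (|(y:ℝ)| - 1/Real.pi)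
              ≤ 2/c * |(y:ℝ)| + |(y:ℝ)| / c + 2/c * |(y:ℝ)| := by linarith
            _ = 5 / c * |(y:ℝ)| := by ring

lemma FF_ge (hp0 : ∀ z, 0 ≤ p z) (hsum : HasSum p 1)
    (hmom : Summable fun z : ℤ => (z : ℝ) ^ 2 * p z) (hcpos : 0 < c)
    (hc : ∀ θ : ℝ, |θ| ≤ Real.pi → c * θ ^ 2 ≤ 1 - phiF p θ)
    (hσpos : 0 < ∑' z : ℤ, (z : ℝ) ^ 2 * p z) (k : ℤ) (hk : 1 ≤ k) :
    (k:ℝ) / (Real.pi * (∑' z : ℤ, (z : ℝ) ^ 2 * p z)) ≤ FF p k := by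
  set σ2 : ℝ := ∑' z : ℤ, (z : ℝ) ^ 2 * p z with hσdef
  have hπ := Real.pi_pos
  have hkR : (1:ℝ) ≤ (k:ℝ) := by exact_mod_cast hk
  have hkpos : (0:ℝ) < k := by linarith
  set f : ℝ → ℝ := fun θ => (1 - Real.cos (k * θ)) / (1 - phiF p θ) with hfdef
  set R : Set ℝ := Set.Ioc (Real.pi/(2*(k:ℝ))) (Real.pi/(k:ℝ)) with hRdef
  have hsub : R ⊆ Set.Ioc (-Real.pi) Real.pi := by
    apply Set.Ioc_subset_Ioc
    · have h0 : (0:ℝ) ≤ Real.pi/(2*(k:ℝ)) := by positivity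
      linarith
    · rw [div_le_iff₀ hkpos]; nlinarith
  have hfint := FF_integrableOn hp0 hsum hcpos hc k
  have hlow : ∀ θ ∈ R, 2*(k:ℝ)^2/(σ2*Real.pi^2) ≤ f θ := by
    intro θ hθ
    have hθ1 : Real.pi/(2*(k:ℝ)) < θ := hθ.1
    have hθ2 : θ ≤ Real.pi/(k:ℝ) := hθ.2
    have hθpos : 0 < θ := lt_trans (by positivity) hθ1
    have hθπ : |θ| ≤ Real.pi := by
      rw [abs_of_pos hθpos]
      calc θ ≤ Real.pi/(k:ℝ) := hθ2
        _ ≤ Real.pi := by rw [div_le_iff₀ hkpos]; nlinarith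
    have hkθ1 : Real.pi/2 ≤ (k:ℝ)*θ := by
      rw [div_lt_iff₀ (by positivity)] at hθ1
      nlinarith
    have hkθ2 : (k:ℝ)*θ ≤ Real.pi := by
      rw [le_div_iff₀ hkpos] at hθ2
      linarith [hθ2]
    have hnum : 1 ≤ 1 - Real.cos ((k:ℝ)*θ) := by
      have := Real.cos_nonpos_of_pi_div_two_le_of_le hkθ1 (by linarith)
      linarith
    have hdenpos : 0 < 1 - phiF p θ := by
      have hx1 := hc θ hθπ
      have hx2 : 0 < c * θ^2 := mul_pos hcpos (pow_pos hθpos 2)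
      linarith
    have hdenle : 1 - phiF p θ ≤ σ2/2 * (Real.pi/(k:ℝ))^2 := by
      calc 1 - phiF p θ ≤ σ2/2 * θ^2 := one_sub_phi_le hp0 hsum hmom θ
        _ ≤ σ2/2 * (Real.pi/(k:ℝ))^2 := by
            apply mul_le_mul_of_nonneg_left _ (by positivity)
            rw [← sq_abs θ, ← sq_abs (Real.pi/(k:ℝ))]
            apply pow_le_pow_left₀ (abs_nonneg θ)
            rw [abs_of_pos hθpos, abs_of_pos (by positivity)]
            exact hθ2
    calc 2*(k:ℝ)^2/(σ2*Real.pi^2) = 1 / (σ2/2 * (Real.pi/(k:ℝ))^2) := by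
          field_simp
      _ ≤ 1 / (1 - phiF p θ) := one_div_le_one_div_of_le hdenpos hdenle
      _ ≤ f θ := div_le_div₀ (by linarith) hnum hdenpos le_rfl
  have hconst_int : IntegrableOn (fun _ : ℝ => 2*(k:ℝ)^2/(σ2*Real.pi^2)) R :=
    integrableOn_const measure_Ioc_lt_top.ne
  have hmono := setIntegral_mono_on hconst_int (hfint.mono_set hsub) measurableSet_Ioc hlow
  rw [setIntegral_const] at hmono
  have h2 : (∫ θ in R, f θ) ≤ FF p k := by
    rw [FF]
    exact setIntegral_mono_set hfint
      (Eventually.of_forall fun θ => integrand_nonneg hp0 hsum k θ)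
      (HasSubset.Subset.eventuallyLE hsub)
  have hvol : (volume R).toReal = Real.pi/(2*(k:ℝ)) := by
    rw [hRdef, Real.volume_Ioc, ENNReal.toReal_ofReal (by
      rw [sub_nonneg, div_le_div_iff₀ (by positivity) (by positivity)]
      nlinarith)]
    field_simp
    ring
  rw [measureReal_def, hvol, smul_eq_mul] at hmono
  calc (k:ℝ) / (Real.pi * σ2) = Real.pi/(2*(k:ℝ)) * (2*(k:ℝ)^2/(σ2*Real.pi^2)) := by
        field_simp
    _ ≤ ∫ θ in R, f θ := hmono
    _ ≤ FF p k := h2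

section harm
variable {p : ℤ → ℝ} {c : ℝ}

lemma pointwise_sum (hp0 : ∀ z, 0 ≤ p z) (hsum : HasSum p 1) (hsymm : ∀ z, p (-z) = p z)
    (y : ℤ) {θ : ℝ} (hD : 1 - phiF p θ ≠ 0) :
    ∑' z : ℤ, p z * ((1 - Real.cos (((y + z : ℤ) : ℝ) * θ)) / (1 - phiF p θ))
      = (1 - Real.cos (y * θ)) / (1 - phiF p θ) + Real.cos (y * θ) := by
  have hnum : ∑' z : ℤ, p z * (1 - Real.cos (((y + z : ℤ) : ℝ) * θ))
      = 1 - Real.cos (y * θ) * phiF p θ := by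
    have hterm : ∀ z : ℤ, p z * (1 - Real.cos (((y + z : ℤ) : ℝ) * θ))
        = p z - (Real.cos (y * θ) * (p z * Real.cos (z * θ))
          - Real.sin (y * θ) * (p z * Real.sin (z * θ))) := by
      intro z
      push_cast
      rw [add_mul, Real.cos_add]
      ring
    rw [tsum_congr hterm]
    have hs2 : Summable fun z : ℤ => Real.cos (y * θ) * (p z * Real.cos (z * θ))
        - Real.sin (y * θ) * (p z * Real.sin (z * θ)) :=
      ((cos_summable hp0 hsum.summable θ).mul_left _).sub
        ((sin_summable hp0 hsum.summable θ).mul_left _)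
    rw [Summable.tsum_sub hsum.summable hs2]
    rw [Summable.tsum_sub ((cos_summable hp0 hsum.summable θ).mul_left _)
      ((sin_summable hp0 hsum.summable θ).mul_left _)]
    rw [tsum_mul_left, tsum_mul_left, sin_sum_zero hsymm θ, hsum.tsum_eq]
    rw [phiF]
    ring
  have hdiv : ∀ z : ℤ, p z * ((1 - Real.cos (((y + z : ℤ) : ℝ) * θ)) / (1 - phiF p θ))
      = p z * (1 - Real.cos (((y + z : ℤ) : ℝ) * θ)) / (1 - phiF p θ) := fun z => by ring
  rw [tsum_congr hdiv, tsum_div_const, hnum]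
  have hsplit : 1 - Real.cos (y * θ) * phiF p θ
      = (1 - Real.cos (y * θ)) + Real.cos (y * θ) * (1 - phiF p θ) := by ring
  rw [hsplit, add_div, mul_div_assoc, div_self hD, mul_one]

lemma cos_integral_zero (y : ℤ) (hy : y ≠ 0) :
    (∫ θ in Set.Ioc (-Real.pi) Real.pi, Real.cos (y * θ)) = 0 := by
  have hπ := Real.pi_pos
  rw [← intervalIntegral.integral_of_le (by linarith : -Real.pi ≤ Real.pi)]
  have hyne : ((y:ℝ)) ≠ 0 := Int.cast_ne_zero.2 hy
  rw [intervalIntegral.integral_comp_mul_left (fun u => Real.cos u) hyne]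
  rw [integral_cos]
  have h1 : (y:ℝ) * -Real.pi = -((y:ℝ) * Real.pi) := by ring
  rw [h1, Real.sin_neg]
  rw [Real.sin_int_mul_pi]
  simp

lemma FF_harmonic (hp0 : ∀ z, 0 ≤ p z) (hsum : HasSum p 1) (hsymm : ∀ z, p (-z) = p z)
    (hmom : Summable fun z : ℤ => (z : ℝ) ^ 2 * p z)
    (hcpos : 0 < c) (hc : ∀ θ : ℝ, |θ| ≤ Real.pi → c * θ ^ 2 ≤ 1 - phiF p θ)
    (y : ℤ) (hy : y ≠ 0) :
    ∑' z : ℤ, p z * FF p (y + z) = FF p y := by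
  have hπ := Real.pi_pos
  set S : Set ℝ := Set.Ioc (-Real.pi) Real.pi with hSdef
  set g : ℤ → ℝ → ℝ := fun z θ => p z * ((1 - Real.cos (((y + z : ℤ) : ℝ) * θ)) / (1 - phiF p θ))
    with hgdef
  have hgmeas : ∀ z : ℤ, AEStronglyMeasurable (g z) (volume.restrict S) := fun z =>
    (((integrand_meas hp0 hsum.summable (y + z)).const_mul (p z))).aestronglyMeasurable
  have hB : ∀ z : ℤ, (∫⁻ θ, ‖g z θ‖₊ ∂(volume.restrict S))
      ≤ ENNReal.ofReal (p z * ((y:ℝ) + (z:ℝ)) ^ 2 / (2 * c)) * volume S := by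
    intro z
    have hbd : ∀ᵐ θ ∂(volume.restrict S),
        (‖g z θ‖₊ : ℝ≥0∞) ≤ ENNReal.ofReal (p z * ((y:ℝ) + (z:ℝ)) ^ 2 / (2 * c)) := by
      filter_upwards [ae_restrict_mem measurableSet_Ioc] with θ hθ
      have hnn : 0 ≤ g z θ :=
        mul_nonneg (hp0 z) (integrand_nonneg hp0 hsum (y + z) θ)
      rw [show ((‖g z θ‖₊ : ℝ≥0∞)) = ‖g z θ‖ₑ from rfl, Real.enorm_eq_ofReal hnn]
      apply ENNReal.ofReal_le_ofReal
      have hle := integrand_le hcpos hc (y + z) (θ := θ) (by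
        rw [abs_le]; exact ⟨le_of_lt hθ.1, hθ.2⟩)
      have hcast : (((y + z : ℤ)):ℝ) ^ 2 = ((y:ℝ) + (z:ℝ)) ^ 2 := by push_cast; ring
      rw [hcast] at hle
      show p z * ((1 - Real.cos (((y + z : ℤ) : ℝ) * θ)) / (1 - phiF p θ))
          ≤ p z * ((y:ℝ) + (z:ℝ)) ^ 2 / (2 * c)
      calc p z * ((1 - Real.cos (((y + z : ℤ) : ℝ) * θ)) / (1 - phiF p θ))
          ≤ p z * (((y:ℝ) + (z:ℝ)) ^ 2 / (2 * c)) :=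
            mul_le_mul_of_nonneg_left hle (hp0 z)
        _ = p z * ((y:ℝ) + (z:ℝ)) ^ 2 / (2 * c) := by ring
    calc (∫⁻ θ, ‖g z θ‖₊ ∂(volume.restrict S))
        ≤ ∫⁻ _, ENNReal.ofReal (p z * ((y:ℝ) + (z:ℝ)) ^ 2 / (2 * c)) ∂(volume.restrict S) :=
          lintegral_mono_ae hbd
      _ = ENNReal.ofReal (p z * ((y:ℝ) + (z:ℝ)) ^ 2 / (2 * c)) * volume S := by
          rw [lintegral_const, Measure.restrict_apply_univ]
  have hBsummable : Summable fun z : ℤ => p z * ((y:ℝ) + (z:ℝ)) ^ 2 / (2 * c) := by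
    apply Summable.of_nonneg_of_le
      (fun z => by have := hp0 z; positivity)
      (fun z => ?_)
      (((hsum.summable.mul_left (2 * (y:ℝ)^2)).add (hmom.mul_left 2)).mul_right (1/(2*c)))
    have h1 : ((y:ℝ) + (z:ℝ)) ^ 2 ≤ 2 * (y:ℝ)^2 + 2 * (z:ℝ)^2 := by
      push_cast
      nlinarith [sq_nonneg ((y:ℝ) - (z:ℝ))]
    have h2 : p z * ((y:ℝ) + (z:ℝ)) ^ 2 ≤ p z * (2 * (y:ℝ)^2 + 2 * (z:ℝ)^2) :=
      mul_le_mul_of_nonneg_left h1 (hp0 z)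
    calc p z * ((y:ℝ) + (z:ℝ)) ^ 2 / (2 * c)
        ≤ p z * (2 * (y:ℝ)^2 + 2 * (z:ℝ)^2) / (2*c) := by
          exact (div_le_div_iff_of_pos_right (by positivity)).2 h2
      _ = (2 * (y:ℝ)^2 * p z + 2 * ((z:ℝ)^2 * p z)) * (1/(2*c)) := by ring
  have hlintsum : ∑' z : ℤ, ∫⁻ θ, ‖g z θ‖₊ ∂(volume.restrict S) ≠ ∞ := by
    apply ne_top_of_le_ne_top (b := ∑' z : ℤ,
      ENNReal.ofReal (p z * ((y:ℝ) + (z:ℝ)) ^ 2 / (2 * c)) * volume S)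
    · rw [ENNReal.tsum_mul_right]
      apply ENNReal.mul_ne_top
      · rw [← ENNReal.ofReal_tsum_of_nonneg (fun z => by have := hp0 z; positivity) hBsummable]
        exact ENNReal.ofReal_ne_top
      · exact (measure_Ioc_lt_top).ne
    · exact ENNReal.tsum_le_tsum hB
  have hit := integral_tsum hgmeas hlintsum
  have hDne : ∀ θ : ℝ, θ ∈ S → θ ≠ 0 → 1 - phiF p θ ≠ 0 := by
    intro θ hθ hθ0
    have := hc θ (by rw [abs_le]; exact ⟨le_of_lt hθ.1, hθ.2⟩)
    have h2 : 0 < c * θ ^ 2 := mul_pos hcpos (pow_pos (abs_pos.2 hθ0 |> fun h => h) 2 |> fun _ => by positivity)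
    linarith
  have hae : ∀ᵐ θ ∂(volume.restrict S), (∑' z : ℤ, g z θ)
      = (1 - Real.cos (y * θ)) / (1 - phiF p θ) + Real.cos (y * θ) := by
    have h0 : ∀ᵐ θ : ℝ ∂(volume.restrict S), θ ≠ 0 := by
      apply ae_restrict_of_ae
      have : volume ({0} : Set ℝ) = 0 := Real.volume_singleton
      filter_upwards [compl_mem_ae_iff.2 this] with θ hθ
      simpa using hθ
    filter_upwards [ae_restrict_mem measurableSet_Ioc, h0] with θ hθ hθ0
    exact pointwise_sum hp0 hsum hsymm y (hDne θ hθ hθ0)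
  have hleft : ∫ θ, (∑' z : ℤ, g z θ) ∂(volume.restrict S)
      = FF p y + (∫ θ in S, Real.cos (y * θ)) := by
    rw [integral_congr_ae hae]
    exact integral_add (FF_integrableOn hp0 hsum hcpos hc y)
      ((Real.continuous_cos.comp (continuous_const.mul continuous_id)).integrableOn_Ioc)
  have hright : ∀ z : ℤ, (∫ θ, g z θ ∂(volume.restrict S)) = p z * FF p (y + z) := by
    intro z
    exact integral_const_mul (p z) _
  rw [hleft, cos_integral_zero y hy, add_zero] at hit
  rw [hit]
  exact tsum_congr fun z => (hright z).symm

end harm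

def stepf (k v z : ℤ) : ℤ := if v = 0 ∨ v = k then v else v + z

def stopW (k x : ℤ) (s : ℕ → ℤ) : ℕ → ℤ
  | 0 => x
  | n+1 => stepf k (stopW k x s n) (s n)

lemma stopW_congr (k x : ℤ) (s t : ℕ → ℤ) (n : ℕ) (h : ∀ i < n, s i = t i) :
    stopW k x s n = stopW k x t n := by
  induction n with
  | zero => rfl
  | succ n ih =>
    have h1 := ih fun i hi => h i (Nat.lt_succ_of_lt hi)
    show stepf k (stopW k x s n) (s n) = stepf k (stopW k x t n) (t n)
    rw [h1, h n (Nat.lt_succ_self n)]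

lemma stopW_eq_walk (k x : ℤ) (s : ℕ → ℤ) (n : ℕ)
    (h : ∀ m < n, ¬(x + ∑ i ∈ Finset.range m, s i = 0 ∨ x + ∑ i ∈ Finset.range m, s i = k)) :
    stopW k x s n = x + ∑ i ∈ Finset.range n, s i := by
  induction n with
  | zero => simp [stopW]
  | succ n ih =>
    have hn := ih fun m hm => h m (Nat.lt_succ_of_lt hm)
    show stepf k (stopW k x s n) (s n) = _
    rw [hn, stepf, if_neg (h n (Nat.lt_succ_self n)), Finset.sum_range_succ]
    ring

lemma stopW_freeze (k x : ℤ) (s : ℕ → ℤ) (n N : ℕ) (hnN : n ≤ N) (h : stopW k x s n = k) :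
    stopW k x s N = k := by
  induction N with
  | zero =>
    have h0 : n = 0 := Nat.le_zero.1 hnN
    rw [h0] at h
    exact h
  | succ N ih =>
    rcases Nat.lt_succ_iff_lt_or_eq.1 (Nat.lt_succ_of_le hnN) with hlt | heq
    · have hk : stopW k x s N = k := ih (Nat.lt_succ_iff.1 hlt)
      show stepf k (stopW k x s N) (s N) = k
      rw [hk, stepf, if_pos (Or.inr rfl)]
    · rw [← heq]
      exact h

lemma stopW_meas {Ω : Type*} [MeasurableSpace Ω] (ξ : ℕ → Ω → ℤ)
    (hmeas : ∀ i, Measurable (ξ i)) (k x : ℤ) (n : ℕ) :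
    Measurable fun ω => stopW k x (fun i => ξ i ω) n := by
  induction n with
  | zero => exact measurable_const
  | succ n ih =>
    show Measurable fun ω => stepf k (stopW k x (fun i => ξ i ω) n) (ξ n ω)
    exact (measurable_of_countable fun q : ℤ × ℤ => stepf k q.1 q.2).comp
      (ih.prodMk (hmeas n))

lemma stopW_indep {Ω : Type*} [MeasurableSpace Ω] {μ : Measure Ω} [IsProbabilityMeasure μ]
    (ξ : ℕ → Ω → ℤ) (hmeas : ∀ i, Measurable (ξ i))
    (hiid : iIndepFun ξ μ) (k x : ℤ) (n : ℕ) :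
    IndepFun (fun ω => stopW k x (fun i => ξ i ω) n) (ξ n) μ := by
  have hdisj : Disjoint (Finset.range n) ({n} : Finset ℕ) := by simp
  have base := hiid.indepFun_finset (Finset.range n) {n} hdisj hmeas
  set gA : (↥(Finset.range n) → ℤ) → ℤ := fun v =>
    stopW k x (fun i => if h : i ∈ Finset.range n then v ⟨i, h⟩ else 0) n with hgA
  set gB : (↥({n} : Finset ℕ) → ℤ) → ℤ := fun v => v ⟨n, Finset.mem_singleton_self n⟩ with hgB
  have hA : (fun ω => stopW k x (fun i => ξ i ω) n)
      = gA ∘ (fun ω (i : ↥(Finset.range n)) => ξ (↑i) ω) := by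
    funext ω
    apply stopW_congr
    intro i hi
    rw [dif_pos (Finset.mem_range.2 hi)]
  have hB : (ξ n) = gB ∘ (fun ω (i : ↥({n} : Finset ℕ)) => ξ (↑i) ω) := rfl
  rw [hA, hB]
  exact base.comp (measurable_of_countable gA) (measurable_of_countable gB)

lemma pabs_summable {p : ℤ → ℝ} (hp0 : ∀ z, 0 ≤ p z) (hp1 : Summable p)
    (hmom : Summable fun z : ℤ => (z : ℝ) ^ 2 * p z) :
    Summable fun z : ℤ => |(z:ℝ)| * p z := by
  apply Summable.of_nonneg_of_le (fun z => by have := hp0 z; positivity)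
    (fun z => ?_) (hmom.add hp1)
  have h1 : |(z:ℝ)| ≤ (z:ℝ)^2 + 1 := by
    rcases le_or_gt |(z:ℝ)| 1 with h | h
    · nlinarith [sq_nonneg ((z:ℝ))]
    · nlinarith [sq_abs ((z:ℝ))]
  have := hp0 z
  nlinarith

lemma FF_sum_summable {p : ℤ → ℝ} {c : ℝ} (hp0 : ∀ z, 0 ≤ p z) (hsum : HasSum p 1)
    (hmom : Summable fun z : ℤ => (z : ℝ) ^ 2 * p z) (hcpos : 0 < c)
    (hc : ∀ θ : ℝ, |θ| ≤ Real.pi → c * θ ^ 2 ≤ 1 - phiF p θ) (v : ℤ) :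
    Summable fun z : ℤ => p z * FF p (v + z) := by
  apply Summable.of_nonneg_of_le
    (fun z => mul_nonneg (hp0 z) (FF_nonneg hp0 hsum _))
    (fun z => ?_)
    ((((hsum.summable.mul_left (|(v:ℝ)|)).add (pabs_summable hp0 hsum.summable hmom)).mul_left (5/c)))
  have h1 : FF p (v + z) ≤ 5 / c * |((v + z : ℤ):ℝ)| := FF_le hp0 hsum hcpos hc (v + z)
  have h2 : |((v + z : ℤ):ℝ)| ≤ |(v:ℝ)| + |(z:ℝ)| := by
    push_cast
    exact abs_add_le _ _
  have h3 : 0 ≤ (5:ℝ)/c := by positivity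
  calc p z * FF p (v + z) ≤ p z * (5/c * (|(v:ℝ)| + |(z:ℝ)|)) := by
        apply mul_le_mul_of_nonneg_left _ (hp0 z)
        calc FF p (v + z) ≤ 5 / c * |((v + z : ℤ):ℝ)| := h1
          _ ≤ 5/c * (|(v:ℝ)| + |(z:ℝ)|) := mul_le_mul_of_nonneg_left h2 h3
    _ = 5/c * (|(v:ℝ)| * p z + |(z:ℝ)| * p z) := by ring

/-- `P^x(τ_k < τ_0) ≤ γ x / k` for `0 ≤ x ≤ k`. -/
theorem stmt1
    {Ω : Type*} [MeasurableSpace Ω] (μ : Measure Ω) [IsProbabilityMeasure μ]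
    (p : ℤ → ℝ) (hp0 : ∀ z, 0 ≤ p z) (hp1 : HasSum p 1)
    (hsymm : ∀ z, p (-z) = p z)
    (hirr : AddSubgroup.closure {z : ℤ | p z ≠ 0} = ⊤)
    (hmom : Summable fun z : ℤ => (z : ℝ) ^ 2 * p z)
    (ξ : ℕ → Ω → ℤ) (hmeas : ∀ i, Measurable (ξ i))
    (hiid : iIndepFun ξ μ)
    (hstep : ∀ i z, (μ {ω | ξ i ω = z}).toReal = p z)
    (hmean : HasSum (fun z : ℤ => (z : ℝ) * p z) 0) :
    ∃ γ : ℝ, 0 < γ ∧ ∀ x k : ℤ, 0 ≤ x → x ≤ k →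
      (μ {ω | ∃ n : ℕ, walk ξ x ω n = k ∧
          ∀ m : ℕ, m ≤ n → walk ξ x ω m ≠ 0}).toReal ≤ γ * (x : ℝ) / (k : ℝ) := by
  classical
  obtain ⟨c, hcpos, hc⟩ := exists_c hp0 hp1 hirr
  obtain ⟨z0, hz00, hpz0⟩ := exists_z0 hp0 hirr
  set σ2 : ℝ := ∑' z : ℤ, (z : ℝ) ^ 2 * p z with hσdef
  have hπ := Real.pi_pos
  have hz0abs : (1:ℝ) ≤ |(z0:ℝ)| := by
    rw [← Int.cast_abs]; exact_mod_cast Int.one_le_abs hz00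
  have hσpos : 0 < σ2 := by
    have h1 : (z0:ℝ)^2 * p z0 ≤ σ2 := by
      apply Summable.le_tsum hmom z0
      intro j _
      have := hp0 j
      positivity
    have h2 : (1:ℝ) ≤ (z0:ℝ)^2 := by rw [← sq_abs]; nlinarith
    nlinarith
  refine ⟨5 * Real.pi * σ2 / c, by positivity, ?_⟩
  intro x k hx hk
  rcases eq_or_lt_of_le hx with hx0 | hxpos
  · -- x = 0 : the event is empty
    have hempty : {ω | ∃ n : ℕ, walk ξ x ω n = k ∧ ∀ m : ℕ, m ≤ n → walk ξ x ω m ≠ 0}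
        = (∅ : Set Ω) := by
      ext ω
      simp only [Set.mem_setOf_eq, Set.mem_empty_iff_false, iff_false, not_exists]
      rintro n ⟨hn, hall⟩
      exact hall 0 (Nat.zero_le n) (by simp [walk, ← hx0])
    rw [hempty]
    simp only [measure_empty, ENNReal.toReal_zero, ← hx0, Int.cast_zero, mul_zero, zero_div]
    exact le_rfl
  · have hx1 : (1:ℤ) ≤ x := hxpos
    have hk1 : (1:ℤ) ≤ k := le_trans hx1 hk
    have hkR : (1:ℝ) ≤ (k:ℝ) := by exact_mod_cast hk1
    have hxR : (1:ℝ) ≤ (x:ℝ) := by exact_mod_cast hx1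
    set Y : ℕ → Ω → ℤ := fun n ω => stopW k x (fun i => ξ i ω) n with hYdef
    have hYmeas : ∀ n, Measurable (Y n) := fun n => stopW_meas ξ hmeas k x n
    have hdist : ∀ n z, μ ((ξ n) ⁻¹' {z}) = ENNReal.ofReal (p z) := by
      intro n z
      have h1 : (μ {ω | ξ n ω = z}).toReal = p z := hstep n z
      have h2 : (ξ n) ⁻¹' {z} = {ω | ξ n ω = z} := by ext ω; simp
      rw [h2, ← h1, ENNReal.ofReal_toReal (measure_ne_top μ _)]
    -- the one step inequality
    have hsteple : ∀ n : ℕ, (∫⁻ ω, ENNReal.ofReal (FF p (Y (n+1) ω)) ∂μ)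
        ≤ ∫⁻ ω, ENNReal.ofReal (FF p (Y n ω)) ∂μ := by
      intro n
      set J : Ω → ℤ × ℤ := fun ω => (Y n ω, ξ n ω) with hJdef
      have hJmeas : Measurable J := (hYmeas n).prodMk (hmeas n)
      have h1 : (∫⁻ ω, ENNReal.ofReal (FF p (Y (n+1) ω)) ∂μ)
          = ∫⁻ q : ℤ × ℤ, ENNReal.ofReal (FF p (stepf k q.1 q.2)) ∂(μ.map J) := by
        rw [lintegral_map (measurable_of_countable _) hJmeas]
        rfl
      have h2 : ∀ q : ℤ × ℤ, (μ.map J) {q} = μ ((Y n) ⁻¹' {q.1}) * ENNReal.ofReal (p q.2) := by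
        rintro ⟨v, z⟩
        rw [Measure.map_apply hJmeas (measurableSet_singleton _)]
        have hpre : J ⁻¹' {(v, z)} = (Y n) ⁻¹' {v} ∩ (ξ n) ⁻¹' {z} := by
          ext ω
          simp [hJdef, Prod.ext_iff]
        rw [hpre, (stopW_indep ξ hmeas hiid k x n).measure_inter_preimage_eq_mul
          {v} {z} (measurableSet_singleton v) (measurableSet_singleton z), hdist n z]
      have hinner : ∀ v : ℤ, (∑' z : ℤ, ENNReal.ofReal (FF p (stepf k v z)) * ENNReal.ofReal (p z))
          ≤ ENNReal.ofReal (FF p v) := by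
        intro v
        apply le_of_eq
        by_cases hv : v = 0 ∨ v = k
        · have hstep0 : ∀ z : ℤ, stepf k v z = v := fun z => if_pos hv
          calc (∑' z : ℤ, ENNReal.ofReal (FF p (stepf k v z)) * ENNReal.ofReal (p z))
              = ENNReal.ofReal (FF p v) * ∑' z : ℤ, ENNReal.ofReal (p z) := by
                rw [← ENNReal.tsum_mul_left]
                exact tsum_congr fun z => by rw [hstep0 z]
            _ = ENNReal.ofReal (FF p v) := by
                rw [← ENNReal.ofReal_tsum_of_nonneg hp0 hp1.summable, hp1.tsum_eq]
                simp
        · have hv0 : v ≠ 0 := fun h => hv (Or.inl h)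
          have hstep0 : ∀ z : ℤ, stepf k v z = v + z := fun z => if_neg hv
          calc (∑' z : ℤ, ENNReal.ofReal (FF p (stepf k v z)) * ENNReal.ofReal (p z))
              = ∑' z : ℤ, ENNReal.ofReal (p z * FF p (v + z)) := by
                apply tsum_congr
                intro z
                rw [hstep0 z, ← ENNReal.ofReal_mul (FF_nonneg hp0 hp1 _), mul_comm]
            _ = ENNReal.ofReal (∑' z : ℤ, p z * FF p (v + z)) := by
                rw [← ENNReal.ofReal_tsum_of_nonneg
                  (fun z => mul_nonneg (hp0 z) (FF_nonneg hp0 hp1 _))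
                  (FF_sum_summable hp0 hp1 hmom hcpos hc v)]
            _ = ENNReal.ofReal (FF p v) := by
                rw [FF_harmonic hp0 hp1 hsymm hmom hcpos hc v hv0]
      calc (∫⁻ ω, ENNReal.ofReal (FF p (Y (n+1) ω)) ∂μ)
          = ∑' q : ℤ × ℤ, ENNReal.ofReal (FF p (stepf k q.1 q.2)) * (μ.map J) {q} := by
            rw [h1, lintegral_countable']
        _ = ∑' q : ℤ × ℤ, ENNReal.ofReal (FF p (stepf k q.1 q.2))
              * (μ ((Y n) ⁻¹' {q.1}) * ENNReal.ofReal (p q.2)) :=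
            tsum_congr fun q => by rw [h2 q]
        _ = ∑' v : ℤ, ∑' z : ℤ, ENNReal.ofReal (FF p (stepf k v z))
              * (μ ((Y n) ⁻¹' {v}) * ENNReal.ofReal (p z)) :=
            ENNReal.tsum_prod (f := fun v z => ENNReal.ofReal (FF p (stepf k v z))
              * (μ ((Y n) ⁻¹' {v}) * ENNReal.ofReal (p z)))
        _ = ∑' v : ℤ, μ ((Y n) ⁻¹' {v})
              * ∑' z : ℤ, ENNReal.ofReal (FF p (stepf k v z)) * ENNReal.ofReal (p z) := by
            apply tsum_congr
            intro v
            rw [← ENNReal.tsum_mul_left]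
            exact tsum_congr fun z => by ring
        _ ≤ ∑' v : ℤ, μ ((Y n) ⁻¹' {v}) * ENNReal.ofReal (FF p v) :=
            ENNReal.tsum_le_tsum fun v => mul_le_mul_right (hinner v) _
        _ = ∫⁻ ω, ENNReal.ofReal (FF p (Y n ω)) ∂μ := by
            rw [← lintegral_map (measurable_of_countable (fun v : ℤ => ENNReal.ofReal (FF p v)))
              (hYmeas n), lintegral_countable']
            exact tsum_congr fun v => by
              rw [Measure.map_apply (hYmeas n) (measurableSet_singleton v), mul_comm]
    have hIter : ∀ N : ℕ, (∫⁻ ω, ENNReal.ofReal (FF p (Y N ω)) ∂μ)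
        ≤ ENNReal.ofReal (FF p x) := by
      intro N
      induction N with
      | zero =>
        have : ∀ ω : Ω, Y 0 ω = x := fun ω => rfl
        simp only [this, lintegral_const, measure_univ, mul_one, le_refl]
      | succ N ih => exact (hsteple N).trans ih
    have hDN : ∀ N : ℕ, ENNReal.ofReal (FF p k) * μ ((Y N) ⁻¹' {k})
        ≤ ENNReal.ofReal (FF p x) := by
      intro N
      have hpt : ∀ ω, ((Y N) ⁻¹' {k}).indicator (fun _ => ENNReal.ofReal (FF p k)) ω
          ≤ ENNReal.ofReal (FF p (Y N ω)) := by
        intro ω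
        by_cases hω : Y N ω = k
        · rw [Set.indicator_of_mem (by simp [hω])]
          rw [hω]
        · rw [Set.indicator_of_notMem (by simp [hω])]
          exact zero_le
      calc ENNReal.ofReal (FF p k) * μ ((Y N) ⁻¹' {k})
          = ∫⁻ ω, ((Y N) ⁻¹' {k}).indicator (fun _ => ENNReal.ofReal (FF p k)) ω ∂μ := by
            rw [lintegral_indicator_const ((hYmeas N) (measurableSet_singleton k))]
        _ ≤ ∫⁻ ω, ENNReal.ofReal (FF p (Y N ω)) ∂μ := lintegral_mono hpt
        _ ≤ ENNReal.ofReal (FF p x) := hIter N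
    -- events
    set E : ℕ → Set Ω := fun N =>
      {ω | ∃ n, n ≤ N ∧ walk ξ x ω n = k ∧ ∀ m : ℕ, m ≤ n → walk ξ x ω m ≠ 0} with hEdef
    have hEsub : ∀ N, E N ⊆ (Y N) ⁻¹' {k} := by
      intro N ω hω
      obtain ⟨n, hnN, hwk, hne⟩ := hω
      have hex : ∃ m, walk ξ x ω m = 0 ∨ walk ξ x ω m = k := ⟨n, Or.inr hwk⟩
      have hn0n : Nat.find hex ≤ n := Nat.find_min' hex (Or.inr hwk)
      have hmin : ∀ m < Nat.find hex, ¬(walk ξ x ω m = 0 ∨ walk ξ x ω m = k) :=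
        fun m hm => Nat.find_min hex hm
      have hwn0 : walk ξ x ω (Nat.find hex) = k := by
        rcases Nat.find_spec hex with h0 | hkk
        · exact absurd h0 (hne (Nat.find hex) hn0n)
        · exact hkk
      have hYn0 : Y (Nat.find hex) ω = k := by
        show stopW k x (fun i => ξ i ω) (Nat.find hex) = k
        rw [stopW_eq_walk k x _ (Nat.find hex) (fun m hm => hmin m hm)]
        exact hwn0
      simp only [Set.mem_preimage, Set.mem_singleton_iff]
      exact stopW_freeze k x _ (Nat.find hex) N (le_trans hn0n hnN) hYn0
    have hEU : {ω | ∃ n : ℕ, walk ξ x ω n = k ∧ ∀ m : ℕ, m ≤ n → walk ξ x ω m ≠ 0}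
        = ⋃ N, E N := by
      ext ω
      simp only [Set.mem_setOf_eq, Set.mem_iUnion, hEdef]
      constructor
      · rintro ⟨n, h1, h2⟩
        exact ⟨n, n, le_rfl, h1, h2⟩
      · rintro ⟨N, n, _, h1, h2⟩
        exact ⟨n, h1, h2⟩
    have hEmono : Monotone E := by
      intro N M hNM ω hω
      obtain ⟨n, hn, h⟩ := hω
      exact ⟨n, le_trans hn hNM, h⟩
    have hFFk_pos : 0 < FF p k := by
      have h1 := FF_ge hp0 hp1 hmom hcpos hc hσpos k hk1
      have h2 : 0 < (k:ℝ) / (Real.pi * σ2) := by positivity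
      linarith
    have hFFx_le : FF p x ≤ 5 / c * (x:ℝ) := by
      have := FF_le hp0 hp1 hcpos hc x
      rwa [abs_of_pos (by linarith : (0:ℝ) < (x:ℝ))] at this
    have hbound : ∀ N, μ (E N) ≤ ENNReal.ofReal (FF p x) / ENNReal.ofReal (FF p k) := by
      intro N
      rw [ENNReal.le_div_iff_mul_le (Or.inl (by
          simp only [ne_eq, ENNReal.ofReal_eq_zero, not_le]
          exact hFFk_pos))
        (Or.inl ENNReal.ofReal_ne_top)]
      calc μ (E N) * ENNReal.ofReal (FF p k)
          ≤ μ ((Y N) ⁻¹' {k}) * ENNReal.ofReal (FF p k) :=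
            mul_le_mul_left (measure_mono (hEsub N)) _
        _ = ENNReal.ofReal (FF p k) * μ ((Y N) ⁻¹' {k}) := mul_comm _ _
        _ ≤ ENNReal.ofReal (FF p x) := hDN N
    have hmeasE : μ {ω | ∃ n : ℕ, walk ξ x ω n = k ∧ ∀ m : ℕ, m ≤ n → walk ξ x ω m ≠ 0}
        ≤ ENNReal.ofReal (FF p x) / ENNReal.ofReal (FF p k) := by
      rw [hEU, Directed.measure_iUnion (hEmono.directed_le)]
      exact iSup_le hbound
    have hne : ENNReal.ofReal (FF p x) / ENNReal.ofReal (FF p k) ≠ ⊤ := by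
      apply (ENNReal.div_lt_top ENNReal.ofReal_ne_top (by
        simp only [ne_eq, ENNReal.ofReal_eq_zero, not_le]
        exact hFFk_pos)).ne
    have htr := ENNReal.toReal_mono hne hmeasE
    rw [ENNReal.toReal_div, ENNReal.toReal_ofReal (FF_nonneg hp0 hp1 x),
      ENNReal.toReal_ofReal (le_of_lt hFFk_pos)] at htr
    calc (μ {ω | ∃ n : ℕ, walk ξ x ω n = k ∧ ∀ m : ℕ, m ≤ n → walk ξ x ω m ≠ 0}).toReal
        ≤ FF p x / FF p k := htr
      _ ≤ (5 / c * (x:ℝ)) / ((k:ℝ) / (Real.pi * σ2)) := by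
          apply div_le_div₀ (by positivity) hFFx_le (by positivity)
            (FF_ge hp0 hp1 hmom hcpos hc hσpos k hk1)
      _ = 5 * Real.pi * σ2 / c * (x:ℝ) / (k:ℝ) := by
          field_simp
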